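/- Let {X_i, i ≥ 1} be a sequence of NA random variables with E[X_i] = 0 for all i, and assume there exist constants m_i and M_i with m_i ≤ X_i ≤ M_i almost surely for 1 ≤ i ≤ n. Set M²(n) = Σ_{i=1}^n (M_i − m_i)² and D(n) = Σ_{i=1}^n (M_i − m_i). Then for any t ≥ 0, E[e^{t S_n}] ≤ exp{ (D²(n)/M²(n)) ℓ(M²(n) t / D(n)) }. -/

import Mathlib

open MeasureTheory Finset

/-- A sequence `{X_i, i ≥ 1}` is negatively associated (NA): for every pair of disjoint
finite subsets `A₁, A₂` of `{1, 2, …}` and all coordinatewise nondecreasing functions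
`f₁, f₂`, one has `Cov(f₁(X_i, i ∈ A₁), f₂(X_j, j ∈ A₂)) ≤ 0` whenever the covariance
exists. -/
def NegAssoc {Ω : Type*} [MeasurableSpace Ω] (μ : Measure Ω) (X : ℕ → Ω → ℝ) : Prop :=
  ∀ A₁ A₂ : Finset ℕ, (∀ i ∈ A₁, 1 ≤ i) → (∀ j ∈ A₂, 1 ≤ j) → Disjoint A₁ A₂ →
    ∀ (f₁ : (↥A₁ → ℝ) → ℝ) (f₂ : (↥A₂ → ℝ) → ℝ), Monotone f₁ → Monotone f₂ →
      Integrable (fun ω => f₁ fun i => X i.1 ω) μ →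
      Integrable (fun ω => f₂ fun j => X j.1 ω) μ →
      Integrable (fun ω => (f₁ fun i => X i.1 ω) * (f₂ fun j => X j.1 ω)) μ →
      ∫ ω, (f₁ fun i => X i.1 ω) * (f₂ fun j => X j.1 ω) ∂μ ≤
        (∫ ω, (f₁ fun i => X i.1 ω) ∂μ) * ∫ ω, (f₂ fun j => X j.1 ω) ∂μ

/-- The partial sum `S_k = ∑_{i=1}^k X_i`. -/
def pSum {Ω : Type*} (X : ℕ → Ω → ℝ) (k : ℕ) (ω : Ω) : ℝ := ∑ i ∈ Finset.Icc 1 k, X i ω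

/-- Rio's function `ℓ(t) = (t − ln t − 1) + t(e^t − 1)⁻¹ + ln(1 − e^{−t})` for `t > 0`,
extended by continuity by `ℓ(0) = 0`. -/
noncomputable def rioL (t : ℝ) : ℝ :=
  if t = 0 then 0
  else (t - Real.log t - 1) + t * (Real.exp t - 1)⁻¹ + Real.log (1 - Real.exp (-t))

/-- The Young transform `ℓ*(x) = sup_{t>0}(xt − ℓ(t))` of Rio's function. -/
noncomputable def rioLStar (x : ℝ) : ℝ :=
  sSup {r : ℝ | ∃ t : ℝ, 0 < t ∧ r = x * t - rioL t}


section RioAux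

open Real Set Filter

lemma one_lt_exp {u : ℝ} (hu : 0 < u) : 1 < Real.exp u := by
  simpa using Real.exp_lt_exp.2 hu

lemma expm1_pos {u : ℝ} (hu : 0 < u) : 0 < Real.exp u - 1 := by
  linarith [one_lt_exp hu]

noncomputable def lform (u : ℝ) : ℝ :=
  (u * (Real.exp u - 1)⁻¹ - 1 + Real.log (Real.exp u - 1)) - Real.log u

lemma rioL_eq {u : ℝ} (hu : 0 < u) : rioL u = lform u := by
  have hE := expm1_pos hu
  have h1 : 1 - Real.exp (-u) = (Real.exp u - 1) / Real.exp u := by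
    rw [Real.exp_neg]
    field_simp
  rw [rioL, if_neg hu.ne', lform, h1, Real.log_div hE.ne' (Real.exp_pos u).ne',
    Real.log_exp]
  ring

noncomputable def psiR (u : ℝ) : ℝ := lform u / u

noncomputable def psi1 (u : ℝ) : ℝ :=
  -(Real.exp u / (Real.exp u - 1) ^ 2) + Real.exp u / (u * (Real.exp u - 1))
    - (Real.log (Real.exp u - 1) - Real.log u) / u ^ 2

noncomputable def psi2 (u : ℝ) : ℝ :=
  Real.exp u * (Real.exp u + 1) / (Real.exp u - 1) ^ 3
    - Real.exp u * ((Real.exp u - 1) + u) / (u ^ 2 * (Real.exp u - 1) ^ 2)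
    - Real.exp u / (u ^ 2 * (Real.exp u - 1))
    + 1 / u ^ 3 + 2 * (Real.log (Real.exp u - 1) - Real.log u) / u ^ 3

lemma hasDerivAt_psiR {u : ℝ} (hu : 0 < u) : HasDerivAt psiR (psi1 u) u := by
  have hE := expm1_pos hu
  set E := Real.exp u with hEdef
  have h1 : HasDerivAt (fun x : ℝ => Real.exp x - 1) E u := (Real.hasDerivAt_exp u).sub_const 1
  have h2 : HasDerivAt (fun x : ℝ => x * (Real.exp x - 1)⁻¹)
      (1 * (E - 1)⁻¹ + u * (-E / (E - 1) ^ 2)) u :=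
    (hasDerivAt_id u).mul (h1.inv hE.ne')
  have h3 : HasDerivAt (fun x : ℝ => Real.log (Real.exp x - 1)) (E / (E - 1)) u := h1.log hE.ne'
  have h4 : HasDerivAt Real.log (1 / u) u := by
    simpa [one_div] using Real.hasDerivAt_log hu.ne'
  have hlf : HasDerivAt lform
      ((1 * (E - 1)⁻¹ + u * (-E / (E - 1) ^ 2) + E / (E - 1)) - 1 / u) u :=
    ((h2.sub_const 1).add h3).sub h4
  have hdiv : HasDerivAt psiR
      ((((1 * (E - 1)⁻¹ + u * (-E / (E - 1) ^ 2) + E / (E - 1)) - 1 / u) * u - lform u * 1)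
        / u ^ 2) u := hlf.div (hasDerivAt_id u) hu.ne'
  convert hdiv using 1
  rw [psi1, lform, ← hEdef]
  field_simp
  ring

lemma hasDerivAt_psi1 {u : ℝ} (hu : 0 < u) : HasDerivAt psi1 (psi2 u) u := by
  have hE := expm1_pos hu
  set E := Real.exp u with hEdef
  have h1 : HasDerivAt (fun x : ℝ => Real.exp x - 1) E u := (Real.hasDerivAt_exp u).sub_const 1
  have hsq : HasDerivAt (fun x : ℝ => (Real.exp x - 1) ^ 2) (2 * (E - 1) ^ 1 * E) u := h1.pow 2
  have ht1 : HasDerivAt (fun x : ℝ => -(Real.exp x / (Real.exp x - 1) ^ 2))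
      (-((E * (E - 1) ^ 2 - E * (2 * (E - 1) ^ 1 * E)) / ((E - 1) ^ 2) ^ 2)) u :=
    ((Real.hasDerivAt_exp u).div hsq (pow_ne_zero 2 hE.ne')).neg
  have hden : HasDerivAt (fun x : ℝ => x * (Real.exp x - 1)) (1 * (E - 1) + u * E) u :=
    (hasDerivAt_id u).mul h1
  have hden_ne : u * (E - 1) ≠ 0 := by positivity
  have ht2 : HasDerivAt (fun x : ℝ => Real.exp x / (x * (Real.exp x - 1)))
      ((E * (u * (E - 1)) - E * (1 * (E - 1) + u * E)) / (u * (E - 1)) ^ 2) u :=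
    (Real.hasDerivAt_exp u).div hden hden_ne
  have h3 : HasDerivAt (fun x : ℝ => Real.log (Real.exp x - 1)) (E / (E - 1)) u := h1.log hE.ne'
  have h4 : HasDerivAt Real.log (1 / u) u := by
    simpa [one_div] using Real.hasDerivAt_log hu.ne'
  have hnum : HasDerivAt (fun x : ℝ => Real.log (Real.exp x - 1) - Real.log x)
      (E / (E - 1) - 1 / u) u := h3.sub h4
  have hx2 : HasDerivAt (fun x : ℝ => x ^ 2) ((2 : ℕ) * u ^ 1) u := hasDerivAt_pow 2 u
  have ht3 : HasDerivAt (fun x : ℝ => (Real.log (Real.exp x - 1) - Real.log x) / x ^ 2)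
      (((E / (E - 1) - 1 / u) * u ^ 2 - (Real.log (E - 1) - Real.log u) * ((2 : ℕ) * u ^ 1))
        / (u ^ 2) ^ 2) u := hnum.div hx2 (pow_ne_zero 2 hu.ne')
  have : HasDerivAt psi1
      (-((E * (E - 1) ^ 2 - E * (2 * (E - 1) ^ 1 * E)) / ((E - 1) ^ 2) ^ 2)
        + (E * (u * (E - 1)) - E * (1 * (E - 1) + u * E)) / (u * (E - 1)) ^ 2
        - ((E / (E - 1) - 1 / u) * u ^ 2 - (Real.log (E - 1) - Real.log u) * ((2 : ℕ) * u ^ 1))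
            / (u ^ 2) ^ 2) u := (ht1.add ht2).sub ht3
  convert this using 1
  rw [psi2, ← hEdef]
  push_cast
  field_simp
  ring

noncomputable def Fc (u : ℝ) : ℝ :=
  u ^ 3 * (Real.exp u * (Real.exp u + 1)) / (Real.exp u - 1) ^ 3
    - u * (Real.exp u * ((Real.exp u - 1) + u)) / (Real.exp u - 1) ^ 2
    - u * Real.exp u / (Real.exp u - 1)
    + 1 + 2 * (Real.log (Real.exp u - 1) - Real.log u)

noncomputable def Gval (u : ℝ) : ℝ :=
  (-2 * ((Real.exp u - 1) ^ 2 - Real.exp u * u ^ 2) ^ 2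
    - u ^ 2 * Real.exp u * (2 * (Real.exp u - 1) - u * (Real.exp u + 1)) ^ 2)
    / (u * (Real.exp u - 1) ^ 4)

lemma Fc_eq_cube_psi2 {u : ℝ} (hu : 0 < u) : Fc u = u ^ 3 * psi2 u := by
  have hE := expm1_pos hu
  rw [Fc, psi2]
  field_simp

lemma hasDerivAt_Fc {u : ℝ} (hu : 0 < u) : HasDerivAt Fc (Gval u) u := by
  have hE := expm1_pos hu
  set E := Real.exp u with hEdef
  have h1 : HasDerivAt (fun x : ℝ => Real.exp x - 1) E u := (Real.hasDerivAt_exp u).sub_const 1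
  have hc3 : HasDerivAt (fun x : ℝ => (Real.exp x - 1) ^ 3) (3 * (E - 1) ^ 2 * E) u := h1.pow 3
  have hc2 : HasDerivAt (fun x : ℝ => (Real.exp x - 1) ^ 2) (2 * (E - 1) ^ 1 * E) u := h1.pow 2
  have hn1 : HasDerivAt (fun x : ℝ => x ^ 3 * (Real.exp x * (Real.exp x + 1)))
      ((3 : ℕ) * u ^ 2 * (E * (E + 1)) + u ^ 3 * (E * (E + 1) + E * E)) u :=
    (hasDerivAt_pow 3 u).mul ((Real.hasDerivAt_exp u).mul ((Real.hasDerivAt_exp u).add_const 1))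
  have ha1 : HasDerivAt (fun x : ℝ => x ^ 3 * (Real.exp x * (Real.exp x + 1)) / (Real.exp x - 1) ^ 3)
      ((((3 : ℕ) * u ^ 2 * (E * (E + 1)) + u ^ 3 * (E * (E + 1) + E * E)) * (E - 1) ^ 3
        - u ^ 3 * (E * (E + 1)) * (3 * (E - 1) ^ 2 * E)) / ((E - 1) ^ 3) ^ 2) u :=
    hn1.div hc3 (pow_ne_zero 3 hE.ne')
  have hn2 : HasDerivAt (fun x : ℝ => x * (Real.exp x * ((Real.exp x - 1) + x)))
      (1 * (E * ((E - 1) + u)) + u * (E * ((E - 1) + u) + E * (E + 1))) u :=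
    (hasDerivAt_id u).mul ((Real.hasDerivAt_exp u).mul (h1.add (hasDerivAt_id u)))
  have ha2 : HasDerivAt
      (fun x : ℝ => x * (Real.exp x * ((Real.exp x - 1) + x)) / (Real.exp x - 1) ^ 2)
      (((1 * (E * ((E - 1) + u)) + u * (E * ((E - 1) + u) + E * (E + 1))) * (E - 1) ^ 2
        - u * (E * ((E - 1) + u)) * (2 * (E - 1) ^ 1 * E)) / ((E - 1) ^ 2) ^ 2) u :=
    hn2.div hc2 (pow_ne_zero 2 hE.ne')
  have hn3 : HasDerivAt (fun x : ℝ => x * Real.exp x) (1 * E + u * E) u :=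
    (hasDerivAt_id u).mul (Real.hasDerivAt_exp u)
  have ha3 : HasDerivAt (fun x : ℝ => x * Real.exp x / (Real.exp x - 1))
      (((1 * E + u * E) * (E - 1) - u * E * E) / (E - 1) ^ 2) u := hn3.div h1 hE.ne'
  have h3 : HasDerivAt (fun x : ℝ => Real.log (Real.exp x - 1)) (E / (E - 1)) u := h1.log hE.ne'
  have h4 : HasDerivAt Real.log (1 / u) u := by
    simpa [one_div] using Real.hasDerivAt_log hu.ne'
  have ha4 : HasDerivAt (fun x : ℝ => 2 * (Real.log (Real.exp x - 1) - Real.log x))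
      (2 * (E / (E - 1) - 1 / u)) u := (h3.sub h4).const_mul 2
  have htot : HasDerivAt Fc
      ((((3 : ℕ) * u ^ 2 * (E * (E + 1)) + u ^ 3 * (E * (E + 1) + E * E)) * (E - 1) ^ 3
          - u ^ 3 * (E * (E + 1)) * (3 * (E - 1) ^ 2 * E)) / ((E - 1) ^ 3) ^ 2
        - ((1 * (E * ((E - 1) + u)) + u * (E * ((E - 1) + u) + E * (E + 1))) * (E - 1) ^ 2
            - u * (E * ((E - 1) + u)) * (2 * (E - 1) ^ 1 * E)) / ((E - 1) ^ 2) ^ 2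
        - ((1 * E + u * E) * (E - 1) - u * E * E) / (E - 1) ^ 2
        + 2 * (E / (E - 1) - 1 / u)) u :=
    (((ha1.sub ha2).sub ha3).add_const 1).add ha4
  convert htot using 1
  rw [Gval, ← hEdef]
  push_cast
  field_simp
  ring

lemma Gval_nonpos {u : ℝ} (hu : 0 < u) : Gval u ≤ 0 := by
  have hE := expm1_pos hu
  have hden : 0 < u * (Real.exp u - 1) ^ 4 := by positivity
  apply div_nonpos_of_nonpos_of_nonneg _ hden.le
  have h1 : 0 ≤ ((Real.exp u - 1) ^ 2 - Real.exp u * u ^ 2) ^ 2 := sq_nonneg _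
  have h2 : 0 ≤ u ^ 2 * Real.exp u * (2 * (Real.exp u - 1) - u * (Real.exp u + 1)) ^ 2 := by
    positivity
  linarith

lemma tendsto_Fc_zero : Filter.Tendsto Fc (nhdsWithin 0 (Ioi 0)) (nhds 0) := by
  have hr : Filter.Tendsto (fun u : ℝ => (Real.exp u - 1) / u) (nhdsWithin 0 (Ioi 0)) (nhds 1) := by
    have h := (Real.hasDerivAt_exp 0).tendsto_slope_zero_right
    simpa [Real.exp_zero, div_eq_inv_mul] using h
  have hE : Filter.Tendsto (fun u : ℝ => Real.exp u) (nhdsWithin 0 (Ioi 0)) (nhds 1) := by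
    have := Real.continuous_exp.tendsto 0
    rw [Real.exp_zero] at this
    exact this.mono_left nhdsWithin_le_nhds
  have hlogr : Filter.Tendsto (fun u : ℝ => Real.log ((Real.exp u - 1) / u))
      (nhdsWithin 0 (Ioi 0)) (nhds 0) := by
    have hc : Filter.Tendsto Real.log (nhds 1) (nhds 0) := by
      have := (Real.continuousAt_log one_ne_zero).tendsto
      rwa [Real.log_one] at this
    exact hc.comp hr
  have hmain : Filter.Tendsto
      (fun u : ℝ => Real.exp u * (Real.exp u + 1) / ((Real.exp u - 1) / u) ^ 3
        - Real.exp u * ((Real.exp u - 1) / u + 1) / ((Real.exp u - 1) / u) ^ 2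
        - Real.exp u / ((Real.exp u - 1) / u)
        + 1 + 2 * Real.log ((Real.exp u - 1) / u))
      (nhdsWithin 0 (Ioi 0)) (nhds (1 * (1 + 1) / 1 ^ 3 - 1 * (1 + 1) / 1 ^ 2 - 1 / 1 + 1 + 2 * 0)) := by
    refine ((((((hE.mul (hE.add_const 1)).div (hr.pow 3) (by norm_num)).sub
      ((hE.mul (hr.add_const 1)).div (hr.pow 2) (by norm_num))).sub
      (hE.div hr one_ne_zero)).add_const 1).add (hlogr.const_mul 2))
  have heq : ∀ u ∈ Ioi (0:ℝ),
      Real.exp u * (Real.exp u + 1) / ((Real.exp u - 1) / u) ^ 3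
        - Real.exp u * ((Real.exp u - 1) / u + 1) / ((Real.exp u - 1) / u) ^ 2
        - Real.exp u / ((Real.exp u - 1) / u)
        + 1 + 2 * Real.log ((Real.exp u - 1) / u) = Fc u := by
    intro u hu
    have hu : (0:ℝ) < u := hu
    have hE' := expm1_pos hu
    rw [Fc, Real.log_div hE'.ne' hu.ne']
    field_simp
  have : (1:ℝ) * (1 + 1) / 1 ^ 3 - 1 * (1 + 1) / 1 ^ 2 - 1 / 1 + 1 + 2 * 0 = 0 := by norm_num
  rw [this] at hmain
  refine hmain.congr' ?_
  filter_upwards [self_mem_nhdsWithin] with u hu using heq u hu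

lemma Fc_nonpos {u : ℝ} (hu : 0 < u) : Fc u ≤ 0 := by
  have hanti : AntitoneOn Fc (Ioi 0) := by
    refine antitoneOn_of_hasDerivWithinAt_nonpos (convex_Ioi 0) (f' := Gval) ?_ ?_ ?_
    · intro x hx
      exact (hasDerivAt_Fc hx).continuousAt.continuousWithinAt
    · intro x hx
      rw [interior_Ioi] at hx
      exact (hasDerivAt_Fc hx).hasDerivWithinAt
    · intro x hx
      rw [interior_Ioi] at hx
      exact Gval_nonpos hx
  refine ge_of_tendsto tendsto_Fc_zero ?_
  have hmem : Ioo (0:ℝ) u ∈ nhdsWithin 0 (Ioi 0) := Ioo_mem_nhdsGT_of_mem ⟨le_refl 0, hu⟩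
  filter_upwards [hmem] with x hx
  exact hanti hx.1 hu hx.2.le

lemma psi2_nonpos {u : ℝ} (hu : 0 < u) : psi2 u ≤ 0 := by
  have h := Fc_nonpos hu
  rw [Fc_eq_cube_psi2 hu] at h
  have hc : 0 < u ^ 3 := by positivity
  nlinarith

lemma concave_psiR : ConcaveOn ℝ (Ioi 0) psiR := by
  refine concaveOn_of_hasDerivWithinAt2_nonpos (convex_Ioi 0)
    (f' := psi1) (f'' := psi2) ?_ ?_ ?_ ?_
  · intro x hx
    exact (hasDerivAt_psiR hx).continuousAt.continuousWithinAt
  · intro x hx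
    rw [interior_Ioi] at hx
    exact (hasDerivAt_psiR hx).hasDerivWithinAt
  · intro x hx
    rw [interior_Ioi] at hx
    exact (hasDerivAt_psi1 hx).hasDerivWithinAt
  · intro x hx
    rw [interior_Ioi] at hx
    exact psi2_nonpos hx

lemma concave_rioL_div : ConcaveOn ℝ (Ioi 0) (fun u => rioL u / u) := by
  refine ⟨convex_Ioi 0, fun x hx y hy a b ha hb hab => ?_⟩
  have hmem : a • x + b • y ∈ Ioi (0:ℝ) := (convex_Ioi 0) hx hy ha hb hab
  have e1 : rioL x / x = psiR x := by rw [psiR, rioL_eq hx]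
  have e2 : rioL y / y = psiR y := by rw [psiR, rioL_eq hy]
  have e3 : rioL (a • x + b • y) / (a • x + b • y) = psiR (a • x + b • y) := by
    rw [psiR, rioL_eq hmem]
  simp only [e1, e2, e3]
  exact concave_psiR.2 hx hy ha hb hab

lemma rioL_zero : rioL 0 = 0 := by simp [rioL]

lemma sum_rioL_le (s : Finset ℕ) (d : ℕ → ℝ) (hd : ∀ i ∈ s, 0 ≤ d i) (t : ℝ) (ht : 0 < t)
    (hD : 0 < ∑ i ∈ s, d i) :
    ∑ i ∈ s, rioL (t * d i) ≤
      (∑ i ∈ s, d i) ^ 2 / (∑ i ∈ s, (d i) ^ 2) *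
        rioL ((∑ i ∈ s, (d i) ^ 2) * t / (∑ i ∈ s, d i)) := by
  classical
  set D := ∑ i ∈ s, d i with hDdef
  set M2 := ∑ i ∈ s, (d i) ^ 2 with hM2def
  have hM2 : 0 < M2 := by
    rcases Finset.exists_lt_of_sum_lt (by simpa using hD : ∑ i ∈ s, (0:ℝ) < ∑ i ∈ s, d i)
      with ⟨i, hi, hdi⟩
    have : (0:ℝ) < (d i) ^ 2 := by positivity
    have hle : (d i) ^ 2 ≤ M2 :=
      Finset.single_le_sum (f := fun j => (d j) ^ 2) (fun j _ => sq_nonneg _) hi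
    linarith
  set s' := s.filter (fun i => d i ≠ 0) with hs'
  have hd' : ∀ i ∈ s', 0 < d i := by
    intro i hi
    rw [hs', Finset.mem_filter] at hi
    exact lt_of_le_of_ne (hd i hi.1) (Ne.symm hi.2)
  have hDs : ∑ i ∈ s', d i = D := Finset.sum_filter_of_ne (fun i _ h => h)
  have hM2s : ∑ i ∈ s', (d i) ^ 2 = M2 :=
    Finset.sum_filter_of_ne (fun i _ h => by
      intro hdi; exact h (by rw [hdi]; ring))
  have hLs : ∑ i ∈ s', rioL (t * d i) = ∑ i ∈ s, rioL (t * d i) :=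
    Finset.sum_filter_of_ne (fun i _ h => by
      intro hdi; exact h (by rw [hdi, mul_zero, rioL_zero]))
  -- Jensen
  have hjen := concave_rioL_div.le_map_sum (t := s') (w := fun i => d i / D)
    (p := fun i => t * d i)
    (fun i hi => div_nonneg (hd' i hi).le hD.le)
    (by rw [← Finset.sum_div, hDs, div_self hD.ne'])
    (fun i hi => by
      have := hd' i hi
      exact mul_pos ht this)
  have hsum_pt : ∑ i ∈ s', (d i / D) • (t * d i) = M2 * t / D := by
    rw [← hM2s, Finset.sum_mul, Finset.sum_div]
    apply Finset.sum_congr rfl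
    intro i hi
    simp only [smul_eq_mul]
    ring
  rw [hsum_pt] at hjen
  have harg : 0 < M2 * t / D := by positivity
  have hlhs : ∑ i ∈ s', (d i / D) • (rioL (t * d i) / (t * d i))
      = (∑ i ∈ s', rioL (t * d i)) / (t * D) := by
    rw [Finset.sum_div]
    apply Finset.sum_congr rfl
    intro i hi
    have hdi := hd' i hi
    simp only [smul_eq_mul]
    field_simp
  rw [hlhs] at hjen
  have hmul := mul_le_mul_of_nonneg_left hjen (by positivity : (0:ℝ) ≤ t * D)
  rw [mul_div_cancel₀ _ (by positivity : (t*D) ≠ 0)] at hmul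
  rw [hLs] at hmul
  refine hmul.trans (le_of_eq ?_)
  field_simp

open MeasureTheory

lemma rio_core {u p : ℝ} (hu : 0 < u) :
    1 + p * (Real.exp u - 1) ≤ Real.exp (rioL u + p * u) := by
  have hE := expm1_pos hu
  have hz0 : 0 < (Real.exp u - 1) / u := by positivity
  set x := u * (1 + p * (Real.exp u - 1)) / (Real.exp u - 1) - 1 with hx
  have h1 : x + 1 ≤ Real.exp x := Real.add_one_le_exp x
  have h2 : 1 + p * (Real.exp u - 1) = ((Real.exp u - 1) / u) * (x + 1) := by
    rw [hx]; field_simp; ring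
  have h3 : ((Real.exp u - 1) / u) * (x + 1) ≤ ((Real.exp u - 1) / u) * Real.exp x :=
    mul_le_mul_of_nonneg_left h1 hz0.le
  have h4 : ((Real.exp u - 1) / u) * Real.exp x = Real.exp (rioL u + p * u) := by
    rw [← Real.exp_log hz0, ← Real.exp_add]
    congr 1
    rw [rioL_eq hu, lform, Real.log_div hE.ne' hu.ne', hx]
    field_simp
    ring
  rw [h2]
  rw [← h4]
  exact h3

lemma integrable_exp_of_ae_le {Ω : Type*} [MeasurableSpace Ω] {μ : Measure Ω}
    [IsProbabilityMeasure μ] {f : Ω → ℝ} (hf : Measurable f) {c : ℝ}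
    (h : ∀ᵐ ω ∂μ, f ω ≤ c) : Integrable (fun ω => Real.exp (f ω)) μ := by
  refine Integrable.mono' (integrable_const (Real.exp c))
    (Real.measurable_exp.comp hf).aestronglyMeasurable ?_
  filter_upwards [h] with ω hω
  rw [Real.norm_eq_abs, Real.abs_exp]
  exact Real.exp_le_exp.2 hω

lemma onevar {Ω : Type*} [MeasurableSpace Ω] (μ : Measure Ω) [IsProbabilityMeasure μ]
    {Y : Ω → ℝ} (hY : Measurable Y) (hint : Integrable Y μ) (hmean : ∫ ω, Y ω ∂μ = 0)
    {a b t : ℝ} (hab : ∀ᵐ ω ∂μ, a ≤ Y ω ∧ Y ω ≤ b) (ht : 0 ≤ t) :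
    ∫ ω, Real.exp (t * Y ω) ∂μ ≤ Real.exp (rioL (t * (b - a))) := by
  have hne : (MeasureTheory.ae μ).NeBot := ae_neBot.2 (IsProbabilityMeasure.ne_zero μ)
  obtain ⟨ω₀, hω₀⟩ := hab.exists
  have hba : a ≤ b := hω₀.1.trans hω₀.2
  -- degenerate cases
  rcases eq_or_lt_of_le ht with ht0 | htpos
  · rw [← ht0]
    simp only [zero_mul, Real.exp_zero]
    rw [integral_const, probReal_univ]
    simp [rioL_zero]
  rcases eq_or_lt_of_le hba with hba0 | hlt
  · -- a = b : Y = a a.e. and a = 0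
    have hYa : ∀ᵐ ω ∂μ, Y ω = a := by
      filter_upwards [hab] with ω hω
      rw [← hba0] at hω
      linarith [hω.1, hω.2]
    have hInt : ∫ ω, Y ω ∂μ = a := by
      rw [integral_congr_ae (hYa.mono fun ω hω => hω)]
      simp [integral_const]
    have ha0 : a = 0 := by rw [← hInt, hmean]
    have : ∀ᵐ ω ∂μ, Real.exp (t * Y ω) = 1 := by
      filter_upwards [hYa] with ω hω
      rw [hω, ha0, mul_zero, Real.exp_zero]
    rw [integral_congr_ae (this.mono fun ω hω => hω)]
    rw [integral_const, probReal_univ]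
    rw [← hba0]
    simp [rioL_zero, Real.exp_nonneg]
  -- main case
  have hb0 : 0 ≤ b := by
    have h1 : ∫ ω, Y ω ∂μ ≤ ∫ _, b ∂μ :=
      integral_mono_ae hint (integrable_const b) (hab.mono fun ω hω => hω.2)
    rw [hmean, integral_const, probReal_univ] at h1
    simpa using h1
  have ha0 : a ≤ 0 := by
    have h1 : ∫ _, a ∂μ ≤ ∫ ω, Y ω ∂μ :=
      integral_mono_ae (integrable_const a) hint (hab.mono fun ω hω => hω.1)
    rw [hmean, integral_const, probReal_univ] at h1
    simpa using h1
  set u := t * (b - a) with hudef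
  have hupos : 0 < u := by
    apply mul_pos htpos
    linarith
  -- step 1 : pointwise convexity bound and integration
  have hptw : ∀ᵐ ω ∂μ, Real.exp (t * Y ω) ≤
      (b * Real.exp (t * a) - a * Real.exp (t * b)) / (b - a)
        + Y ω * ((Real.exp (t * b) - Real.exp (t * a)) / (b - a)) := by
    filter_upwards [hab] with ω hω
    obtain ⟨h1, h2⟩ := hω
    set y := Y ω
    have hba' : b - a ≠ 0 := sub_ne_zero.2 (ne_of_gt hlt)
    have hlam1 : 0 ≤ (b - y) / (b - a) := by
      apply div_nonneg <;> linarith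
    have hlam2 : 0 ≤ (y - a) / (b - a) := by
      apply div_nonneg <;> linarith
    have hlamsum : (b - y) / (b - a) + (y - a) / (b - a) = 1 := by
      field_simp
      ring
    have hconv := convexOn_exp.2 (Set.mem_univ (t * a)) (Set.mem_univ (t * b))
      hlam1 hlam2 hlamsum
    have harg : ((b - y) / (b - a)) • (t * a) + ((y - a) / (b - a)) • (t * b) = t * y := by
      simp only [smul_eq_mul]
      field_simp [hba']
      ring
    rw [harg] at hconv
    refine hconv.trans (le_of_eq ?_)
    simp only [smul_eq_mul]
    field_simp
    ring
  have hIexp : Integrable (fun ω => Real.exp (t * Y ω)) μ := by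
    refine integrable_exp_of_ae_le (by measurability) (c := t * b) ?_
    filter_upwards [hab] with ω hω
    exact mul_le_mul_of_nonneg_left hω.2 ht
  have hIrhs : Integrable (fun ω =>
      (b * Real.exp (t * a) - a * Real.exp (t * b)) / (b - a)
        + Y ω * ((Real.exp (t * b) - Real.exp (t * a)) / (b - a))) μ :=
    (integrable_const _).add (hint.mul_const _)
  have hstep1 : ∫ ω, Real.exp (t * Y ω) ∂μ ≤
      (b * Real.exp (t * a) - a * Real.exp (t * b)) / (b - a) := by
    refine (integral_mono_ae hIexp hIrhs hptw).trans (le_of_eq ?_)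
    rw [integral_add (integrable_const _) (hint.mul_const _)]
    rw [integral_const, probReal_univ, integral_mul_const, hmean]
    simp
  -- step 2 : real inequality
  set p := -a / (b - a) with hp
  have hba' : b - a ≠ 0 := by linarith
  have hcore := rio_core (p := p) hupos
  have hpu : p * u = -(t * a) := by
    rw [hp, hudef]
    field_simp
  have hexpu : Real.exp u = Real.exp (t * b) / Real.exp (t * a) := by
    rw [hudef, ← Real.exp_sub]
    congr 1
    ring
  have hkey : (b * Real.exp (t * a) - a * Real.exp (t * b)) / (b - a)
      ≤ Real.exp (rioL u) := by
    have h5 := mul_le_mul_of_nonneg_right hcore (Real.exp_pos (-(p * u))).le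
    have h6 : Real.exp (rioL u + p * u) * Real.exp (-(p * u)) = Real.exp (rioL u) := by
      rw [← Real.exp_add]
      congr 1
      ring
    rw [h6] at h5
    refine le_trans (le_of_eq ?_) h5
    rw [hpu, hexpu, hp]
    rw [neg_neg]
    field_simp
    ring
  exact hstep1.trans hkey

lemma pSum_succ {Ω : Type*} (X : ℕ → Ω → ℝ) (k : ℕ) (ω : Ω) :
    pSum X (k + 1) ω = pSum X k ω + X (k + 1) ω := by
  rw [pSum, pSum, Finset.sum_Icc_succ_top (Nat.le_add_left 1 k)]

lemma prod_bound {Ω : Type*} [MeasurableSpace Ω] (μ : Measure Ω) [IsProbabilityMeasure μ]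
    (X : ℕ → Ω → ℝ) (hmeas : ∀ i, Measurable (X i)) (hNA : NegAssoc μ X)
    (n : ℕ) (mlo Mhi : ℕ → ℝ)
    (hbd : ∀ i ∈ Finset.Icc 1 n, ∀ᵐ ω ∂μ, mlo i ≤ X i ω ∧ X i ω ≤ Mhi i)
    (t : ℝ) (ht : 0 ≤ t) :
    ∀ k, 1 ≤ k → k ≤ n →
      ∫ ω, Real.exp (t * pSum X k ω) ∂μ ≤ ∏ i ∈ Finset.Icc 1 k, ∫ ω, Real.exp (t * X i ω) ∂μ := by
  have hbd_all : ∀ᵐ ω ∂μ, ∀ i ∈ Finset.Icc 1 n, mlo i ≤ X i ω ∧ X i ω ≤ Mhi i :=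
    (Filter.eventually_all_finset _).2 hbd
  have hmeas_pSum : ∀ k, Measurable (fun ω => pSum X k ω) := fun k =>
    Finset.measurable_sum _ (fun i _ => hmeas i)
  have hint_pSum : ∀ k, k ≤ n → Integrable (fun ω => Real.exp (t * pSum X k ω)) μ := by
    intro k hk
    refine integrable_exp_of_ae_le ((measurable_const.mul (hmeas_pSum k)))
      (c := t * ∑ i ∈ Finset.Icc 1 k, Mhi i) ?_
    filter_upwards [hbd_all] with ω hω
    refine mul_le_mul_of_nonneg_left (Finset.sum_le_sum fun i hi => ?_) ht
    exact (hω i (Finset.Icc_subset_Icc_right hk hi)).2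
  have hint_X : ∀ i, 1 ≤ i → i ≤ n → Integrable (fun ω => Real.exp (t * X i ω)) μ := by
    intro i h1 h2
    refine integrable_exp_of_ae_le ((measurable_const.mul (hmeas i))) (c := t * Mhi i) ?_
    filter_upwards [hbd i (Finset.mem_Icc.2 ⟨h1, h2⟩)] with ω hω
    exact mul_le_mul_of_nonneg_left hω.2 ht
  intro k hk
  induction k, hk using Nat.le_induction with
  | base =>
    intro h1n
    have : pSum X 1 = fun ω => X 1 ω := by
      funext ω; rw [pSum]; simp
    rw [this]
    simp
  | succ k hk IH =>
    intro hk1n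
    have hkn : k ≤ n := le_trans (Nat.le_succ k) hk1n
    set A₁ := Finset.Icc 1 k with hA₁
    set A₂ := ({k + 1} : Finset ℕ) with hA₂
    have hdisj : Disjoint A₁ A₂ := by
      rw [hA₁, hA₂, Finset.disjoint_singleton_right, Finset.mem_Icc]
      omega
    have hmono : ∀ (s : Finset ℕ), Monotone (fun g : (↥s → ℝ) => Real.exp (t * ∑ i ∈ s.attach, g i)) := by
      intro s g g' h
      exact Real.exp_le_exp.2 (mul_le_mul_of_nonneg_left (Finset.sum_le_sum fun i _ => h i) ht)
    have hc₁ : ∀ ω, Real.exp (t * ∑ i ∈ A₁.attach, X i.1 ω) = Real.exp (t * pSum X k ω) := by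
      intro ω
      rw [Finset.sum_attach A₁ (fun i => X i ω), pSum]
    have hc₂ : ∀ ω, Real.exp (t * ∑ j ∈ A₂.attach, X j.1 ω) = Real.exp (t * X (k + 1) ω) := by
      intro ω
      rw [Finset.sum_attach A₂ (fun j => X j ω), hA₂, Finset.sum_singleton]
    have hprod_eq : ∀ ω, Real.exp (t * pSum X k ω) * Real.exp (t * X (k + 1) ω)
        = Real.exp (t * pSum X (k + 1) ω) := by
      intro ω
      rw [← Real.exp_add, pSum_succ]
      ring_nf
    have hI1 : Integrable (fun ω => Real.exp (t * ∑ i ∈ A₁.attach, X i.1 ω)) μ := by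
      simp only [hc₁]; exact hint_pSum k hkn
    have hI2 : Integrable (fun ω => Real.exp (t * ∑ j ∈ A₂.attach, X j.1 ω)) μ := by
      simp only [hc₂]; exact hint_X (k + 1) (Nat.le_add_left 1 k) hk1n
    have hI3 : Integrable (fun ω => Real.exp (t * ∑ i ∈ A₁.attach, X i.1 ω)
        * Real.exp (t * ∑ j ∈ A₂.attach, X j.1 ω)) μ := by
      simp only [hc₁, hc₂, hprod_eq]
      exact hint_pSum (k + 1) hk1n
    have hna := hNA A₁ A₂ (fun i hi => (Finset.mem_Icc.1 hi).1)
      (fun j hj => by rw [hA₂, Finset.mem_singleton] at hj; omega) hdisj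
      (fun g => Real.exp (t * ∑ i ∈ A₁.attach, g i))
      (fun g => Real.exp (t * ∑ j ∈ A₂.attach, g j))
      (hmono A₁) (hmono A₂) hI1 hI2 hI3
    simp only [hc₁, hc₂, hprod_eq] at hna
    calc ∫ ω, Real.exp (t * pSum X (k + 1) ω) ∂μ
        ≤ (∫ ω, Real.exp (t * pSum X k ω) ∂μ) * ∫ ω, Real.exp (t * X (k + 1) ω) ∂μ := hna
      _ ≤ (∏ i ∈ Finset.Icc 1 k, ∫ ω, Real.exp (t * X i ω) ∂μ)
            * ∫ ω, Real.exp (t * X (k + 1) ω) ∂μ := by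
          refine mul_le_mul_of_nonneg_right (IH hkn) ?_
          exact integral_nonneg fun ω => (Real.exp_pos _).le
      _ = ∏ i ∈ Finset.Icc 1 (k + 1), ∫ ω, Real.exp (t * X i ω) ∂μ := by
          rw [Finset.prod_Icc_succ_top (Nat.le_add_left 1 k)]

end RioAux

/-- Rio-type moment bound (2.37): for centered NA random variables with
`m_i ≤ X_i ≤ M_i` a.s., `M²(n) = ∑(M_i − m_i)²` and `D(n) = ∑(M_i − m_i)`, for any `t ≥ 0`,
`E[e^{tS_n}] ≤ exp{(D²(n)/M²(n)) ℓ(M²(n)t/D(n))}`. -/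
theorem stmt18 {Ω : Type*} [MeasurableSpace Ω] (μ : Measure Ω) [IsProbabilityMeasure μ]
    (X : ℕ → Ω → ℝ) (hmeas : ∀ i, Measurable (X i)) (hNA : NegAssoc μ X)
    (hint : ∀ i, 1 ≤ i → Integrable (X i) μ)
    (hmean : ∀ i, 1 ≤ i → ∫ ω, X i ω ∂μ = 0)
    (n : ℕ) (hn : 1 ≤ n) (mlo Mhi : ℕ → ℝ)
    (hbd : ∀ i ∈ Finset.Icc 1 n, ∀ᵐ ω ∂μ, mlo i ≤ X i ω ∧ X i ω ≤ Mhi i)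
    (t : ℝ) (ht : 0 ≤ t) :
    ∫ ω, Real.exp (t * pSum X n ω) ∂μ ≤
      Real.exp ((∑ i ∈ Finset.Icc 1 n, (Mhi i - mlo i)) ^ 2 /
          (∑ i ∈ Finset.Icc 1 n, (Mhi i - mlo i) ^ 2) *
        rioL ((∑ i ∈ Finset.Icc 1 n, (Mhi i - mlo i) ^ 2) * t /
          (∑ i ∈ Finset.Icc 1 n, (Mhi i - mlo i)))) := by
  classical
  have hne : (MeasureTheory.ae μ).NeBot := ae_neBot.2 (IsProbabilityMeasure.ne_zero μ)
  set d : ℕ → ℝ := fun i => Mhi i - mlo i with hd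
  have hd0 : ∀ i ∈ Finset.Icc 1 n, 0 ≤ d i := by
    intro i hi
    obtain ⟨ω, hω⟩ := (hbd i hi).exists
    rw [hd]
    dsimp only
    linarith [hω.1, hω.2]
  by_cases htz : t = 0
  · subst htz
    simp only [zero_mul, Real.exp_zero, integral_const, probReal_univ, ENNReal.toReal_one,
      smul_eq_mul, mul_one, mul_zero, zero_div]
    rw [rioL_zero, mul_zero, Real.exp_zero]
  have htpos : 0 < t := lt_of_le_of_ne ht (Ne.symm htz)
  -- step 1 : NA product bound
  have step1 := prod_bound μ X hmeas hNA n mlo Mhi hbd t ht n hn le_rfl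
  -- step 2 : one-variable bounds
  have step2 : ∏ i ∈ Finset.Icc 1 n, ∫ ω, Real.exp (t * X i ω) ∂μ
      ≤ ∏ i ∈ Finset.Icc 1 n, Real.exp (rioL (t * (Mhi i - mlo i))) := by
    refine Finset.prod_le_prod (fun i _ => integral_nonneg fun ω => (Real.exp_pos _).le)
      (fun i hi => ?_)
    have h1i := (Finset.mem_Icc.1 hi).1
    exact onevar μ (hmeas i) (hint i h1i) (hmean i h1i) (hbd i hi) ht
  have step2' : ∏ i ∈ Finset.Icc 1 n, Real.exp (rioL (t * (Mhi i - mlo i)))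
      = Real.exp (∑ i ∈ Finset.Icc 1 n, rioL (t * d i)) := by
    rw [← Real.exp_sum]
  by_cases hD : ∑ i ∈ Finset.Icc 1 n, d i = 0
  · -- degenerate : all increments zero
    have hdz : ∀ i ∈ Finset.Icc 1 n, d i = 0 :=
      (Finset.sum_eq_zero_iff_of_nonneg hd0).1 hD
    have hsum0 : ∑ i ∈ Finset.Icc 1 n, rioL (t * d i) = 0 := by
      refine Finset.sum_eq_zero fun i hi => ?_
      rw [hdz i hi, mul_zero, rioL_zero]
    have hrhs : (∑ i ∈ Finset.Icc 1 n, (Mhi i - mlo i)) ^ 2 /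
          (∑ i ∈ Finset.Icc 1 n, (Mhi i - mlo i) ^ 2) *
        rioL ((∑ i ∈ Finset.Icc 1 n, (Mhi i - mlo i) ^ 2) * t /
          (∑ i ∈ Finset.Icc 1 n, (Mhi i - mlo i))) = 0 := by
      have : ∑ i ∈ Finset.Icc 1 n, (Mhi i - mlo i) = 0 := hD
      rw [this]
      norm_num
    rw [hrhs]
    calc ∫ ω, Real.exp (t * pSum X n ω) ∂μ
        ≤ ∏ i ∈ Finset.Icc 1 n, ∫ ω, Real.exp (t * X i ω) ∂μ := step1
      _ ≤ ∏ i ∈ Finset.Icc 1 n, Real.exp (rioL (t * (Mhi i - mlo i))) := step2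
      _ = Real.exp (∑ i ∈ Finset.Icc 1 n, rioL (t * d i)) := step2'
      _ = Real.exp 0 := by rw [hsum0]
  · have hDpos : 0 < ∑ i ∈ Finset.Icc 1 n, d i :=
      lt_of_le_of_ne (Finset.sum_nonneg hd0) (Ne.symm hD)
    have hjen := sum_rioL_le (Finset.Icc 1 n) d hd0 t htpos hDpos
    calc ∫ ω, Real.exp (t * pSum X n ω) ∂μ
        ≤ ∏ i ∈ Finset.Icc 1 n, ∫ ω, Real.exp (t * X i ω) ∂μ := step1
      _ ≤ ∏ i ∈ Finset.Icc 1 n, Real.exp (rioL (t * (Mhi i - mlo i))) := step2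
      _ = Real.exp (∑ i ∈ Finset.Icc 1 n, rioL (t * d i)) := step2'
      _ ≤ Real.exp ((∑ i ∈ Finset.Icc 1 n, (Mhi i - mlo i)) ^ 2 /
            (∑ i ∈ Finset.Icc 1 n, (Mhi i - mlo i) ^ 2) *
          rioL ((∑ i ∈ Finset.Icc 1 n, (Mhi i - mlo i) ^ 2) * t /
            (∑ i ∈ Finset.Icc 1 n, (Mhi i - mlo i)))) := Real.exp_le_exp.2 hjen
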